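/- Let (X, ν) be a finite measure space (e.g. a bounded Borel subset of ℝ^d with Lebesgue measure) and Φ : Ω → Measure(X) a point process whose intensity measure Λ (with Λ(B) = E[Φ(B)]) has a ν-density λ : X → (0, ∞) with 0 < ∫ λ dν < ∞. For finite measures Q with ν-density q : X → (0, ∞), define S(Q, φ) = −∫_X log q(x) dφ(x) + ∫_X q dν. Assume ∫ λ |log q| dν < ∞ and ∫ λ |log λ| dν < ∞ and ∫ q dν < ∞ for all reports considered. Then for every such report Q: E[S(Q, Φ)] ≥ E[S(Λ, Φ)], with equality if and only if q = λ ν-almost everywhere (i.e. Q = Λ). Hence the point-process analogue of the Dawid–Sebastiani score, obtained by evaluating every intensity report through the log-likelihood of the Poisson point process with that intensity, is a strictly consistent scoring function for the intensity measure. -/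

import Mathlib

open MeasureTheory ENNReal

/-- Campbell's theorem (real-valued version): if the intensity measure of `Φ`
has `ν`-density `lam ≥ 0`, and `lam * |g|` is `ν`-integrable, then
`ω ↦ ∫ g dΦ(ω)` is `μ`-integrable with `∫ ω, ∫ g dΦ(ω) dμ = ∫ lam * g dν`. -/
theorem campbell_aux
    {Ω X : Type*} [MeasurableSpace Ω] [MeasurableSpace X]
    (μ : Measure Ω) (ν : Measure X) (Φ : Ω → Measure X)
    (hΦm : Measurable Φ)
    (lam : X → ℝ) (hlamMeas : Measurable lam) (hlamNonneg : ∀ x, 0 ≤ lam x)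
    (hΛ : ∀ B : Set X, MeasurableSet B →
      ∫⁻ ω, Φ ω B ∂μ = ∫⁻ x in B, ENNReal.ofReal (lam x) ∂ν)
    (g : X → ℝ) (hg : Measurable g)
    (hint : Integrable (fun x => lam x * |g x|) ν) :
    Integrable (fun ω => ∫ x, g x ∂Φ ω) μ ∧
      ∫ ω, ∫ x, g x ∂Φ ω ∂μ = ∫ x, lam x * g x ∂ν := by
  -- the mixture measure equals `ν.withDensity (ofReal ∘ lam)`
  have hm : μ.bind Φ = ν.withDensity (fun x => ENNReal.ofReal (lam x)) := by
    ext B hB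
    rw [Measure.bind_apply hB hΦm.aemeasurable, hΛ B hB, withDensity_apply _ hB]
  -- lintegral form of Campbell's theorem
  have hlint : ∀ (h : X → ℝ≥0∞), Measurable h →
      ∫⁻ ω, ∫⁻ x, h x ∂Φ ω ∂μ = ∫⁻ x, ENNReal.ofReal (lam x) * h x ∂ν := by
    intro h hh
    rw [← Measure.lintegral_bind hΦm.aemeasurable hh.aemeasurable, hm,
      lintegral_withDensity_eq_lintegral_mul _ hlamMeas.ennreal_ofReal hh]
    rfl
  -- finiteness of the total absolute mass
  have habs : ∫⁻ x, ENNReal.ofReal (lam x) * ENNReal.ofReal |g x| ∂ν ≠ ∞ := by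
    have h1 : ∫⁻ x, ENNReal.ofReal (lam x) * ENNReal.ofReal |g x| ∂ν
        = ∫⁻ x, ENNReal.ofReal (lam x * |g x|) ∂ν := by
      refine lintegral_congr fun x => ?_
      rw [ENNReal.ofReal_mul (hlamNonneg x)]
    have h2 := (hasFiniteIntegral_iff_ofReal
      (Filter.Eventually.of_forall fun x =>
        mul_nonneg (hlamNonneg x) (abs_nonneg (g x)))).1 hint.hasFiniteIntegral
    rw [h1]
    exact h2.ne
  -- positive and negative parts
  have hgp : Measurable fun x => ENNReal.ofReal (g x) := hg.ennreal_ofReal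
  have hgn : Measurable fun x => ENNReal.ofReal (-g x) := hg.neg.ennreal_ofReal
  have hboundp : ∀ x, ENNReal.ofReal (g x) ≤ ENNReal.ofReal |g x| :=
    fun x => ENNReal.ofReal_le_ofReal (le_abs_self _)
  have hboundn : ∀ x, ENNReal.ofReal (-g x) ≤ ENNReal.ofReal |g x| :=
    fun x => ENNReal.ofReal_le_ofReal (neg_le_abs _)
  have hmeasIp : Measurable fun ω => ∫⁻ x, ENNReal.ofReal (g x) ∂Φ ω :=
    (Measure.measurable_lintegral hgp).comp hΦm
  have hmeasIn : Measurable fun ω => ∫⁻ x, ENNReal.ofReal (-g x) ∂Φ ω :=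
    (Measure.measurable_lintegral hgn).comp hΦm
  have hIp : ∫⁻ ω, ∫⁻ x, ENNReal.ofReal (g x) ∂Φ ω ∂μ
      = ∫⁻ x, ENNReal.ofReal (lam x) * ENNReal.ofReal (g x) ∂ν := hlint _ hgp
  have hIn : ∫⁻ ω, ∫⁻ x, ENNReal.ofReal (-g x) ∂Φ ω ∂μ
      = ∫⁻ x, ENNReal.ofReal (lam x) * ENNReal.ofReal (-g x) ∂ν := hlint _ hgn
  have hfinp : ∫⁻ ω, ∫⁻ x, ENNReal.ofReal (g x) ∂Φ ω ∂μ ≠ ∞ := by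
    rw [hIp]
    exact ne_top_of_le_ne_top habs (lintegral_mono fun x =>
      mul_le_mul_right (hboundp x) _)
  have hfinn : ∫⁻ ω, ∫⁻ x, ENNReal.ofReal (-g x) ∂Φ ω ∂μ ≠ ∞ := by
    rw [hIn]
    exact ne_top_of_le_ne_top habs (lintegral_mono fun x =>
      mul_le_mul_right (hboundn x) _)
  -- a.e. finiteness
  have haep : ∀ᵐ ω ∂μ, ∫⁻ x, ENNReal.ofReal (g x) ∂Φ ω < ∞ :=
    ae_lt_top hmeasIp hfinp
  have haen : ∀ᵐ ω ∂μ, ∫⁻ x, ENNReal.ofReal (-g x) ∂Φ ω < ∞ :=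
    ae_lt_top hmeasIn hfinn
  -- a.e., g is Φ ω-integrable and the Bochner integral splits
  have haeint : ∀ᵐ ω ∂μ, Integrable g (Φ ω) := by
    filter_upwards [haep, haen] with ω h1 h2
    refine ⟨hg.aestronglyMeasurable, ?_⟩
    rw [hasFiniteIntegral_iff_norm]
    have : ∀ x, ENNReal.ofReal ‖g x‖ ≤ ENNReal.ofReal (g x) + ENNReal.ofReal (-g x) := by
      intro x
      rcases le_total 0 (g x) with h | h
      · rw [Real.norm_eq_abs, abs_of_nonneg h]; exact le_add_right le_rfl
      · rw [Real.norm_eq_abs, abs_of_nonpos h]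
        exact le_add_left (ENNReal.ofReal_le_ofReal le_rfl)
    calc ∫⁻ x, ENNReal.ofReal ‖g x‖ ∂Φ ω
        ≤ ∫⁻ x, (ENNReal.ofReal (g x) + ENNReal.ofReal (-g x)) ∂Φ ω :=
          lintegral_mono this
      _ = (∫⁻ x, ENNReal.ofReal (g x) ∂Φ ω) + ∫⁻ x, ENNReal.ofReal (-g x) ∂Φ ω :=
          lintegral_add_left hgp _
      _ < ∞ := ENNReal.add_lt_top.2 ⟨h1, h2⟩
  have hsplit : ∀ᵐ ω ∂μ, ∫ x, g x ∂Φ ω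
      = (∫⁻ x, ENNReal.ofReal (g x) ∂Φ ω).toReal
        - (∫⁻ x, ENNReal.ofReal (-g x) ∂Φ ω).toReal := by
    filter_upwards [haeint] with ω h
    exact integral_eq_lintegral_pos_part_sub_lintegral_neg_part h
  -- the two toReal pieces are integrable
  have hintp : Integrable (fun ω => (∫⁻ x, ENNReal.ofReal (g x) ∂Φ ω).toReal) μ :=
    integrable_toReal_of_lintegral_ne_top hmeasIp.aemeasurable hfinp
  have hintn : Integrable (fun ω => (∫⁻ x, ENNReal.ofReal (-g x) ∂Φ ω).toReal) μ :=
    integrable_toReal_of_lintegral_ne_top hmeasIn.aemeasurable hfinn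
  have hInt : Integrable (fun ω => ∫ x, g x ∂Φ ω) μ :=
    (hintp.sub hintn).congr (hsplit.mono fun ω h => h.symm)
  refine ⟨hInt, ?_⟩
  -- lam * g is ν-integrable
  have hlg : Integrable (fun x => lam x * g x) ν := by
    refine hint.mono' (hlamMeas.mul hg).aestronglyMeasurable ?_
    filter_upwards with x
    rw [Real.norm_eq_abs, abs_mul, abs_of_nonneg (hlamNonneg x)]
  calc ∫ ω, ∫ x, g x ∂Φ ω ∂μ
      = ∫ ω, ((∫⁻ x, ENNReal.ofReal (g x) ∂Φ ω).toReal
          - (∫⁻ x, ENNReal.ofReal (-g x) ∂Φ ω).toReal) ∂μ :=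
        integral_congr_ae hsplit
    _ = (∫⁻ ω, ∫⁻ x, ENNReal.ofReal (g x) ∂Φ ω ∂μ).toReal
          - (∫⁻ ω, ∫⁻ x, ENNReal.ofReal (-g x) ∂Φ ω ∂μ).toReal := by
        rw [integral_sub hintp hintn,
          integral_toReal hmeasIp.aemeasurable (ae_lt_top hmeasIp hfinp),
          integral_toReal hmeasIn.aemeasurable (ae_lt_top hmeasIn hfinn)]
    _ = (∫⁻ x, ENNReal.ofReal (lam x * g x) ∂ν).toReal
          - (∫⁻ x, ENNReal.ofReal (-(lam x * g x)) ∂ν).toReal := by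
        rw [hIp, hIn]
        congr 1 <;> congr 1 <;> refine lintegral_congr fun x => ?_
        · rw [ENNReal.ofReal_mul (hlamNonneg x)]
        · rw [show -(lam x * g x) = lam x * -g x by ring,
            ENNReal.ofReal_mul (hlamNonneg x)]
    _ = ∫ x, lam x * g x ∂ν :=
        (integral_eq_lintegral_pos_part_sub_lintegral_neg_part hlg).symm

/-- **Strict consistency of the Poisson point process (Dawid–Sebastiani type)
score for the intensity.** On a finite measure space `(X, ν)`, if the point
process `Φ` has intensity measure with `ν`-density `lam > 0`, then the score
`S(q, φ) = -∫ log q dφ + ∫ q dν` for reports given by positive `ν`-densities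
`q` satisfies `E[S(q, Φ)] ≥ E[S(lam, Φ)]`, with equality iff `q = lam`
`ν`-almost everywhere. -/
theorem poisson_loglik_intensity_score_strictly_consistent
    {Ω X : Type*} [MeasurableSpace Ω] [MeasurableSpace X]
    (μ : Measure Ω) [IsProbabilityMeasure μ]
    (ν : Measure X) [IsFiniteMeasure ν]
    (Φ : Ω → Measure X)
    (hΦmeas : ∀ B : Set X, MeasurableSet B → Measurable fun ω => Φ ω B)
    -- the intensity measure of `Φ` has `ν`-density `lam` with
    -- `0 < ∫ lam dν < ∞`
    (lam : X → ℝ) (hlamMeas : Measurable lam) (hlamPos : ∀ x, 0 < lam x)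
    (hlamInt : Integrable lam ν) (hlamTotPos : 0 < ∫ x, lam x ∂ν)
    (hΛ : ∀ B : Set X, MeasurableSet B →
      ∫⁻ ω, Φ ω B ∂μ = ∫⁻ x in B, ENNReal.ofReal (lam x) ∂ν)
    -- a report: a positive `ν`-density `q`
    (q : X → ℝ) (hqMeas : Measurable q) (hqPos : ∀ x, 0 < q x)
    -- integrability assumptions
    (hqInt : Integrable q ν)
    (hlogq : Integrable (fun x => lam x * |Real.log (q x)|) ν)
    (hloglam : Integrable (fun x => lam x * |Real.log (lam x)|) ν)
    -- the score
    (Sc : (X → ℝ) → Measure X → ℝ)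
    (hSc : ∀ (p : X → ℝ) (φ : Measure X),
      Sc p φ = -(∫ x, Real.log (p x) ∂φ) + ∫ x, p x ∂ν) :
    (∫ ω, Sc lam (Φ ω) ∂μ ≤ ∫ ω, Sc q (Φ ω) ∂μ) ∧
    (∫ ω, Sc q (Φ ω) ∂μ = ∫ ω, Sc lam (Φ ω) ∂μ ↔ q =ᵐ[ν] lam) := by
  have hΦm : Measurable Φ := Measure.measurable_of_measurable_coe Φ hΦmeas
  have hlamNonneg : ∀ x, 0 ≤ lam x := fun x => (hlamPos x).le
  obtain ⟨hIq, hEq⟩ := campbell_aux μ ν Φ hΦm lam hlamMeas hlamNonneg hΛ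
    (fun x => Real.log (q x)) (Real.measurable_log.comp hqMeas) hlogq
  obtain ⟨hIl, hEl⟩ := campbell_aux μ ν Φ hΦm lam hlamMeas hlamNonneg hΛ
    (fun x => Real.log (lam x)) (Real.measurable_log.comp hlamMeas) hloglam
  -- expected scores
  have hScore : ∀ (p : X → ℝ),
      Integrable (fun ω => ∫ x, Real.log (p x) ∂Φ ω) μ →
      (∫ ω, ∫ x, Real.log (p x) ∂Φ ω ∂μ = ∫ x, lam x * Real.log (p x) ∂ν) →
      ∫ ω, Sc p (Φ ω) ∂μ
        = -(∫ x, lam x * Real.log (p x) ∂ν) + ∫ x, p x ∂ν := by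
    intro p hI hE
    simp_rw [hSc p]
    have hI' : Integrable (fun ω => -(∫ x, Real.log (p x) ∂Φ ω)) μ := hI.neg
    rw [integral_add hI' (integrable_const _), integral_neg, hE,
      integral_const]
    simp
  have hScq := hScore q hIq hEq
  have hScl := hScore lam hIl hEl
  -- integrability of the pieces
  have hloglamInt : Integrable (fun x => lam x * Real.log (lam x)) ν := by
    refine hloglam.mono'
      (hlamMeas.mul (Real.measurable_log.comp hlamMeas)).aestronglyMeasurable ?_
    filter_upwards with x
    rw [Real.norm_eq_abs, abs_mul, abs_of_nonneg (hlamNonneg x)]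
  have hlogqInt : Integrable (fun x => lam x * Real.log (q x)) ν := by
    refine hlogq.mono'
      (hlamMeas.mul (Real.measurable_log.comp hqMeas)).aestronglyMeasurable ?_
    filter_upwards with x
    rw [Real.norm_eq_abs, abs_mul, abs_of_nonneg (hlamNonneg x)]
  have h1 : Integrable
      (fun x => lam x * Real.log (lam x) - lam x * Real.log (q x)) ν :=
    hloglamInt.sub hlogqInt
  have h2 : Integrable (fun x => q x - lam x) ν := hqInt.sub hlamInt
  -- the divergence integrand
  have hFInt : Integrable (fun x =>
      (lam x * Real.log (lam x) - lam x * Real.log (q x)) + (q x - lam x)) ν :=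
    h1.add h2
  -- the expected score difference is the integral of F
  have hdiff : ∫ ω, Sc q (Φ ω) ∂μ - ∫ ω, Sc lam (Φ ω) ∂μ
      = ∫ x, ((lam x * Real.log (lam x) - lam x * Real.log (q x))
          + (q x - lam x)) ∂ν := by
    rw [hScq, hScl, integral_add h1 h2, integral_sub hloglamInt hlogqInt,
      integral_sub hqInt hlamInt]
    ring
  -- pointwise nonnegativity of F
  have hFnn : ∀ x, 0 ≤ (lam x * Real.log (lam x) - lam x * Real.log (q x))
      + (q x - lam x) := by
    intro x
    have h := Real.log_le_sub_one_of_pos (div_pos (hqPos x) (hlamPos x))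
    rw [Real.log_div (hqPos x).ne' (hlamPos x).ne'] at h
    have h2 : lam x * (Real.log (q x) - Real.log (lam x))
        ≤ lam x * (q x / lam x - 1) := mul_le_mul_of_nonneg_left h (hlamNonneg x)
    have h3 : lam x * (q x / lam x - 1) = q x - lam x := by
      field_simp [(hlamPos x).ne']
    nlinarith [h2, h3]
  -- F vanishes only at points where q = lam
  have hFzero : ∀ x, (lam x * Real.log (lam x) - lam x * Real.log (q x))
      + (q x - lam x) = 0 → q x = lam x := by
    intro x hx
    by_contra hne
    have hratio : q x / lam x ≠ 1 := by
      intro h1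
      exact hne (by field_simp [(hlamPos x).ne'] at h1; exact h1)
    have h := Real.log_lt_sub_one_of_pos (div_pos (hqPos x) (hlamPos x)) hratio
    rw [Real.log_div (hqPos x).ne' (hlamPos x).ne'] at h
    have h2 : lam x * (Real.log (q x) - Real.log (lam x))
        < lam x * (q x / lam x - 1) := (mul_lt_mul_iff_right₀ (hlamPos x)).2 h
    have h3 : lam x * (q x / lam x - 1) = q x - lam x := by
      field_simp [(hlamPos x).ne']
    nlinarith [h2, h3]
  have hFint_nonneg : 0 ≤ ∫ x, ((lam x * Real.log (lam x)
      - lam x * Real.log (q x)) + (q x - lam x)) ∂ν := integral_nonneg hFnn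
  refine ⟨by linarith [hdiff, hFint_nonneg], ?_⟩
  rw [← sub_eq_zero, hdiff,
    integral_eq_zero_iff_of_nonneg hFnn hFInt]
  constructor
  · intro h
    filter_upwards [h] with x hx
    exact hFzero x hx
  · intro h
    filter_upwards [h] with x hx
    show (lam x * Real.log (lam x) - lam x * Real.log (q x)) + (q x - lam x) = 0
    rw [hx]
    ring
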